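/- Let n and r be integers with 1 ≤ r ≤ n − 2, and let G be a finite simple graph of order n with vertex connectivity exactly r. Then H(G) ≤ ((n−1)² + r)/2, with equality if and only if G is isomorphic to K(n−1,r). -/

import Mathlib

open SimpleGraph Finset

/-- The Harary index of a finite simple graph: sum of reciprocals of distances over
unordered pairs of distinct vertices (pairs at infinite distance contribute `0`,
since `SimpleGraph.dist` is `0` there and `1/0 = 0` in `ℝ`). -/
noncomputable def hararyIndex {V : Type*} [Fintype V] (G : SimpleGraph V) : ℝ :=
  (∑ u : V, ∑ v : V, (1 : ℝ) / (G.dist u v)) / 2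

/-- The graph `K(n-1, r)` on `n` vertices: a complete graph `K_{n-1}` on the first
`n - 1` vertices, together with one extra vertex (the last one) joined to exactly the
first `r` vertices of the `K_{n-1}`. -/
def Knr (n r : ℕ) : SimpleGraph (Fin n) :=
  SimpleGraph.fromRel (fun a b =>
    ((a : ℕ) < n - 1 ∧ (b : ℕ) < n - 1) ∨ ((a : ℕ) = n - 1 ∧ (b : ℕ) < r))

/-- The vertex connectivity of `G`: the least number of vertices whose deletion yields
a disconnected graph or a single vertex. -/
noncomputable def vertexConnectivity {V : Type*} [Fintype V] (G : SimpleGraph V) : ℕ :=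
  sInf {k | ∃ S : Set V, S.ncard = k ∧
    (¬ (G.induce (Sᶜ : Set V)).Connected ∨ (Sᶜ : Set V).ncard = 1)}


def KnrStruct {V : Type*} (G : SimpleGraph V) (v : V) (S : Finset V) : Prop :=
  v ∉ S ∧ ∀ u w, G.Adj u w ↔ u ≠ w ∧
    ((u ≠ v ∧ w ≠ v) ∨ (u = v ∧ w ∈ S) ∨ (w = v ∧ u ∈ S))

lemma knrStruct_dist {V : Type*} [DecidableEq V] (G : SimpleGraph V) [DecidableRel G.Adj] (v : V) (S : Finset V)
    (h : KnrStruct G v S) (hS : S.Nonempty) (u w : V) :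
    (1 : ℝ) / (G.dist u w) =
      if u = w then 0
      else if G.Adj u w then 1 else (1:ℝ)/2 := by
  obtain ⟨hv, hadj⟩ := h
  by_cases huw : u = w
  · subst huw; simp
  · rw [if_neg huw]
    by_cases hA : G.Adj u w
    · rw [if_pos hA, (SimpleGraph.dist_eq_one_iff_adj).2 hA]; norm_num
    · rw [if_neg hA]
      -- distance is 2
      have hd : G.dist u w = 2 := by
        -- find the structure pattern
        have hpat : (u = v ∧ w ≠ v ∧ w ∉ S) ∨ (w = v ∧ u ≠ v ∧ u ∉ S) := by
          have := (hadj u w).not.1 hA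
          push_neg at this
          have h2 := this huw
          by_cases hu : u = v
          · left
            refine ⟨hu, ?_, ?_⟩
            · intro hw; exact huw (hu.trans hw.symm)
            · intro hwS
              exact h2.2.1 hu hwS
          · by_cases hw : w = v
            · right
              exact ⟨hw, hu, fun huS => h2.2.2 hw huS⟩
            · exact absurd (h2.1 hu) hw
        obtain ⟨s, hs⟩ := hS
        have hsv : s ≠ v := fun h => hv (h ▸ hs)
        -- walk of length 2 : u - s' - w  where u or w is v
        have key : ∀ a : V, a ≠ v → a ∉ S → G.dist v a = 2 := by
          intro a hav haS
          have h1 : G.Adj v s := by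
            rw [hadj]; exact ⟨hsv.symm, Or.inr (Or.inl ⟨rfl, hs⟩)⟩
          have h2 : G.Adj s a := by
            rw [hadj]
            refine ⟨fun h => haS (h ▸ hs), Or.inl ⟨hsv, hav⟩⟩
          have hwalk : G.dist v a ≤ 2 := by
            have := SimpleGraph.dist_le ((h1.toWalk.append h2.toWalk))
            simpa using this
          have hne : G.dist v a ≠ 1 := by
            intro hd1
            have hadj' := (SimpleGraph.dist_eq_one_iff_adj).1 hd1
            rw [hadj] at hadj'
            rcases hadj'.2 with ⟨h',_⟩|⟨_,h'⟩|⟨h',_⟩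
            · exact h' rfl
            · exact haS h'
            · exact hav h'
          have hne0 : G.dist v a ≠ 0 := by
            rw [SimpleGraph.dist_ne_zero_iff_ne_and_reachable]
            exact ⟨hav.symm, (h1.toWalk.append h2.toWalk).reachable⟩
          omega
        rcases hpat with ⟨hu, hwv, hwS⟩ | ⟨hw, huv, huS⟩
        · rw [hu]; exact key w hwv hwS
        · rw [SimpleGraph.dist_comm, hw]; exact key u huv huS
      rw [hd]; norm_num

lemma filter_card_aux {V : Type*} [Fintype V] [DecidableEq V] (v : V) (S : Finset V)
    (hv : v ∉ S) :
    (univ.filter (fun w => w ≠ v ∧ w ∉ S)).card = Fintype.card V - 1 - S.card := by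
  have : univ.filter (fun w => w ≠ v ∧ w ∉ S) = univ \ insert v S := by
    ext w; simp [not_or, and_comm]
  rw [this, Finset.card_sdiff_of_subset (subset_univ _), Finset.card_insert_of_notMem hv,
    Finset.card_univ]
  omega

lemma knrStruct_sum {V : Type*} [Fintype V] [DecidableEq V] (G : SimpleGraph V)
    [DecidableRel G.Adj] (v : V) (S : Finset V)
    (h : KnrStruct G v S) (hS : S.Nonempty) (hn : S.card + 1 ≤ Fintype.card V) :
    ∑ u : V, ∑ w : V, (1 : ℝ) / (G.dist u w) =
      (Fintype.card V : ℝ) * (Fintype.card V) - (Fintype.card V)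
        - ((Fintype.card V : ℝ) - 1 - S.card) := by
  have hptw : ∀ u w : V, (1 : ℝ) / (G.dist u w) =
      1 - (if u = w then (1:ℝ) else 0)
        - ((if u = v ∧ w ≠ v ∧ w ∉ S then (1:ℝ) else 0) / 2
          + (if w = v ∧ u ≠ v ∧ u ∉ S then (1:ℝ) else 0) / 2) := by
    intro u w
    rw [knrStruct_dist G v S h hS u w]
    by_cases huw : u = w
    · subst huw
      have h1 : ¬(u = v ∧ u ≠ v ∧ u ∉ S) := by tauto
      simp [h1]
    · rw [if_neg huw, if_neg (fun h' : u = w => huw h')]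
      by_cases hA : G.Adj u w
      · rw [if_pos hA]
        have hna : ¬(u = v ∧ w ≠ v ∧ w ∉ S) ∧ ¬(w = v ∧ u ≠ v ∧ u ∉ S) := by
          rw [(h.2 u w)] at hA
          obtain ⟨-, hA⟩ := hA
          constructor
          · rintro ⟨h1, h2, h3⟩
            rcases hA with ⟨h4,-⟩|⟨-,h4⟩|⟨h4,-⟩ <;> [exact h4 h1; exact h3 h4; exact h2 h4]
          · rintro ⟨h1, h2, h3⟩
            rcases hA with ⟨-,h4⟩|⟨h4,-⟩|⟨-,h4⟩ <;> [exact h4 h1; exact h2 h4; exact h3 h4]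
        rw [if_neg hna.1, if_neg hna.2]; norm_num
      · rw [if_neg hA]
        have hpat : (u = v ∧ w ≠ v ∧ w ∉ S) ∨ (w = v ∧ u ≠ v ∧ u ∉ S) := by
          have := (h.2 u w).not.1 hA
          push_neg at this
          have h2 := this huw
          by_cases hu : u = v
          · exact Or.inl ⟨hu, fun hw => huw (hu.trans hw.symm), fun hwS => h2.2.1 hu hwS⟩
          · by_cases hw : w = v
            · exact Or.inr ⟨hw, hu, fun huS => h2.2.2 hw huS⟩
            · exact absurd (h2.1 hu) hw
        rcases hpat with hp | hp
        · rw [if_pos hp, if_neg (fun hq => hq.2.1 (hp.1))]; norm_num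
        · rw [if_neg (fun hq => hq.2.1 (hp.1)), if_pos hp]; norm_num
  have hQcard : ∑ w : V, (if w ≠ v ∧ w ∉ S then (1:ℝ) else 0)
      = (Fintype.card V : ℝ) - 1 - S.card := by
    rw [Finset.sum_boole, filter_card_aux v S h.1, Nat.sub_sub,
      Nat.cast_sub (by omega)]
    push_cast; ring
  have T2 : ∑ u : V, ∑ w : V, (if u = w then (1:ℝ) else 0) = (Fintype.card V : ℝ) := by
    simp
  have T3 : ∑ u : V, ∑ w : V, (if u = v ∧ w ≠ v ∧ w ∉ S then (1:ℝ) else 0)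
      = (Fintype.card V : ℝ) - 1 - S.card := by
    have key : ∀ u : V, ∑ w : V, (if u = v ∧ w ≠ v ∧ w ∉ S then (1:ℝ) else 0)
        = if u = v then ((Fintype.card V : ℝ) - 1 - S.card) else 0 := by
      intro u
      by_cases hu : u = v
      · rw [if_pos hu, ← hQcard]
        refine Finset.sum_congr rfl fun w _ => ?_
        have hiff : (u = v ∧ w ≠ v ∧ w ∉ S) ↔ (w ≠ v ∧ w ∉ S) := by simp [hu]
        exact if_congr hiff rfl rfl
      · simp [hu]
    rw [Finset.sum_congr rfl (fun u _ => key u)]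
    simp
  have T4 : ∑ u : V, ∑ w : V, (if w = v ∧ u ≠ v ∧ u ∉ S then (1:ℝ) else 0)
      = (Fintype.card V : ℝ) - 1 - S.card := by
    rw [Finset.sum_comm]
    exact T3
  simp only [hptw]
  simp only [Finset.sum_sub_distrib, Finset.sum_add_distrib, ← Finset.sum_div]
  rw [T2, T3, T4]
  simp only [Finset.sum_const, Finset.card_univ, nsmul_eq_mul, mul_one]
  ring

lemma exists_good_equiv {V W : Type*} [Fintype V] [Fintype W] [DecidableEq V] [DecidableEq W]
    (v : V) (w : W) (S : Finset V) (T : Finset W) (hv : v ∉ S) (hw : w ∉ T)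
    (hc : Fintype.card V = Fintype.card W) (hST : S.card = T.card) :
    ∃ e : V ≃ W, e v = w ∧ ∀ x : V, x ∈ S ↔ e x ∈ T := by
  have hcard2 : (univ \ insert v S).card = (univ \ insert w T).card := by
    rw [Finset.card_sdiff_of_subset (subset_univ _), Finset.card_sdiff_of_subset (subset_univ _),
      Finset.card_insert_of_notMem hv, Finset.card_insert_of_notMem hw,
      Finset.card_univ, Finset.card_univ, hc, hST]
  let e₁ : (S : Finset V) ≃ (T : Finset W) := Finset.equivOfCardEq hST
  let e₂ : (univ \ insert v S : Finset V) ≃ (univ \ insert w T : Finset W) :=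
    Finset.equivOfCardEq hcard2
  let f : V → W := fun x =>
    if hx : x = v then w
    else if hx2 : x ∈ S then e₁ ⟨x, hx2⟩
    else e₂ ⟨x, by simp [hx, hx2]⟩
  let g : W → V := fun y =>
    if hy : y = w then v
    else if hy2 : y ∈ T then e₁.symm ⟨y, hy2⟩
    else e₂.symm ⟨y, by simp [hy, hy2]⟩
  have hfv : f v = w := by simp [f]
  have hfS : ∀ x, x ∈ S → (f x ∈ T ∧ f x ≠ w) := by
    intro x hx
    have hxv : x ≠ v := fun h => hv (h ▸ hx)
    have : f x = ↑(e₁ ⟨x, hx⟩) := by simp [f, hxv, hx]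
    rw [this]
    exact ⟨(e₁ ⟨x, hx⟩).2, fun h => hw (h ▸ (e₁ ⟨x, hx⟩).2)⟩
  have hfR : ∀ x (hxv : x ≠ v) (hxS : x ∉ S), (f x ∉ T ∧ f x ≠ w) := by
    intro x hxv hxS
    have : f x = ↑(e₂ ⟨x, by simp [hxv, hxS]⟩) := by simp [f, hxv, hxS]
    rw [this]
    have h2 := (e₂ ⟨x, by simp [hxv, hxS]⟩).2
    simp only [Finset.mem_sdiff, Finset.mem_univ, true_and, Finset.mem_insert, not_or] at h2
    exact ⟨h2.2, h2.1⟩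
  have hgf : ∀ x, g (f x) = x := by
    intro x
    by_cases hx : x = v
    · subst hx; simp [hfv, g]
    · by_cases hx2 : x ∈ S
      · obtain ⟨h1, h2⟩ := hfS x hx2
        have hfx : f x = ↑(e₁ ⟨x, hx2⟩) := by simp [f, hx, hx2]
        simp only [g, dif_neg h2, dif_pos h1]
        have : (⟨f x, h1⟩ : (T : Finset W)) = e₁ ⟨x, hx2⟩ := Subtype.ext hfx
        rw [this, Equiv.symm_apply_apply]
      · obtain ⟨h1, h2⟩ := hfR x hx hx2
        have hfx : f x = ↑(e₂ ⟨x, by simp [hx, hx2]⟩) := by simp [f, hx, hx2]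
        simp only [g, dif_neg h2, dif_neg h1]
        have : (⟨f x, by simp [h1, h2]⟩ : (univ \ insert w T : Finset W))
            = e₂ ⟨x, by simp [hx, hx2]⟩ := Subtype.ext hfx
        rw [this, Equiv.symm_apply_apply]
  -- symmetric facts for g
  have hgw : g w = v := by simp [g]
  have hgT : ∀ y, y ∈ T → (g y ∈ S ∧ g y ≠ v) := by
    intro y hy
    have hyw : y ≠ w := fun h => hw (h ▸ hy)
    have : g y = ↑(e₁.symm ⟨y, hy⟩) := by simp [g, hyw, hy]
    rw [this]
    exact ⟨(e₁.symm ⟨y, hy⟩).2, fun h => hv (h ▸ (e₁.symm ⟨y, hy⟩).2)⟩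
  have hgR : ∀ y (hyw : y ≠ w) (hyT : y ∉ T), (g y ∉ S ∧ g y ≠ v) := by
    intro y hyw hyT
    have : g y = ↑(e₂.symm ⟨y, by simp [hyw, hyT]⟩) := by simp [g, hyw, hyT]
    rw [this]
    have h2 := (e₂.symm ⟨y, by simp [hyw, hyT]⟩).2
    simp only [Finset.mem_sdiff, Finset.mem_univ, true_and, Finset.mem_insert, not_or] at h2
    exact ⟨h2.2, h2.1⟩
  have hfg : ∀ y, f (g y) = y := by
    intro y
    by_cases hy : y = w
    · subst hy; simp [hgw, hfv]
    · by_cases hy2 : y ∈ T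
      · obtain ⟨h1, h2⟩ := hgT y hy2
        have hgy : g y = ↑(e₁.symm ⟨y, hy2⟩) := by simp [g, hy, hy2]
        simp only [f, dif_neg h2, dif_pos h1]
        have : (⟨g y, h1⟩ : (S : Finset V)) = e₁.symm ⟨y, hy2⟩ := Subtype.ext hgy
        rw [this, Equiv.apply_symm_apply]
      · obtain ⟨h1, h2⟩ := hgR y hy hy2
        have hgy : g y = ↑(e₂.symm ⟨y, by simp [hy, hy2]⟩) := by simp [g, hy, hy2]
        simp only [f, dif_neg h2, dif_neg h1]
        have : (⟨g y, by simp [h1, h2]⟩ : (univ \ insert v S : Finset V))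
            = e₂.symm ⟨y, by simp [hy, hy2]⟩ := Subtype.ext hgy
        rw [this, Equiv.apply_symm_apply]
  refine ⟨⟨f, g, hgf, hfg⟩, hfv, fun x => ?_⟩
  simp only [Equiv.coe_fn_mk]
  constructor
  · intro hx; exact (hfS x hx).1
  · intro hx
    by_contra hxS
    by_cases hxv : x = v
    · subst hxv; rw [hfv] at hx; exact hw hx
    · exact (hfR x hxv hxS).1 hx

lemma knr_filter_card (n r : ℕ) (h : r < n) :
    (univ.filter (fun i : Fin n => (i : ℕ) < r)).card = r := by
  have : univ.filter (fun i : Fin n => (i : ℕ) < r) = Finset.Iio (⟨r, h⟩ : Fin n) := by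
    ext i; simp [Fin.lt_def]
  rw [this, Fin.card_Iio]

lemma knrStruct_Knr (n r : ℕ) (hr : 1 ≤ r) (hrn : r + 2 ≤ n) :
    KnrStruct (Knr n r) (⟨n - 1, by omega⟩ : Fin n)
      (univ.filter (fun i : Fin n => (i : ℕ) < r)) := by
  constructor
  · simp; omega
  · intro u w
    have hu := u.isLt
    have hw := w.isLt
    have hne : ∀ a : Fin n, a ≠ (⟨n - 1, by omega⟩ : Fin n) ↔ (a : ℕ) < n - 1 := by
      intro a
      rw [Fin.ne_iff_vne]
      constructor
      · intro h; have := a.isLt; simp at h ⊢; omega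
      · intro h; simp at h ⊢; omega
    have heq : ∀ a : Fin n, a = (⟨n - 1, by omega⟩ : Fin n) ↔ (a : ℕ) = n - 1 := by
      intro a; rw [Fin.ext_iff]
    simp only [Knr, SimpleGraph.fromRel_adj, Finset.mem_filter, Finset.mem_univ, true_and,
      hne, heq, Fin.ne_iff_vne]
    omega

lemma knrStruct_nonempty_iso {V W : Type*} [Fintype V] [Fintype W] [DecidableEq V]
    [DecidableEq W] {G : SimpleGraph V} {G' : SimpleGraph W} {v : V} {S : Finset V}
    {w : W} {T : Finset W}
    (h : KnrStruct G v S) (h' : KnrStruct G' w T)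
    (hc : Fintype.card V = Fintype.card W) (hST : S.card = T.card) :
    Nonempty (G ≃g G') := by
  obtain ⟨e, hev, heS⟩ := exists_good_equiv v w S T h.1 h'.1 hc hST
  refine ⟨⟨e, @fun a b => ?_⟩⟩
  have h1 : ∀ x : V, e x = w ↔ x = v := fun x =>
    ⟨fun hx => e.injective (hx.trans hev.symm), fun hx => hx ▸ hev⟩
  rw [h.2 a b, h'.2 (e a) (e b)]
  simp only [Ne, e.apply_eq_iff_eq, h1, ← heS]

lemma cut_pairs {V : Type*} [Fintype V] [DecidableEq V] (G : SimpleGraph V)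
    (r : ℕ) (hconn : vertexConnectivity G = r) (hrn : r + 2 ≤ Fintype.card V) :
    ∃ A B : Finset V, Disjoint A B ∧ A.Nonempty ∧ B.Nonempty ∧
      A.card + B.card = Fintype.card V - r ∧
      ∀ a ∈ A, ∀ b ∈ B, ¬ G.Adj a b := by
  classical
  have hne : {k | ∃ S : Set V, S.ncard = k ∧
      (¬ (G.induce (Sᶜ : Set V)).Connected ∨ (Sᶜ : Set V).ncard = 1)}.Nonempty := by
    refine ⟨Fintype.card V, Set.univ, by simp [Set.ncard_univ, Nat.card_eq_fintype_card],
      Or.inl fun hc => ?_⟩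
    have := hc.nonempty
    rw [Set.compl_univ] at this
    simp at this
  have hmem := Nat.sInf_mem hne
  rw [← vertexConnectivity, hconn] at hmem
  obtain ⟨S, hScard, hS⟩ := hmem
  have hcompl : (Sᶜ : Set V).ncard = Fintype.card V - r := by
    have := Set.ncard_add_ncard_compl S
    rw [Nat.card_eq_fintype_card] at this
    omega
  have h2 : 2 ≤ (Sᶜ : Set V).ncard := by omega
  have hnc : ¬ (G.induce (Sᶜ : Set V)).Connected := by
    rcases hS with h | h
    · exact h
    · rw [hcompl] at h; omega
  have hty : Nonempty ↥(Sᶜ : Set V) := by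
    rw [Set.nonempty_coe_sort]
    exact Set.nonempty_of_ncard_ne_zero (by omega)
  rw [SimpleGraph.connected_iff] at hnc
  push_neg at hnc
  have hpre : ¬ (G.induce (Sᶜ : Set V)).Preconnected := fun hp => not_isEmpty_of_nonempty _ (hnc hp)
  rw [SimpleGraph.Preconnected] at hpre
  push_neg at hpre
  obtain ⟨x, y, hxy⟩ := hpre
  set A : Finset V :=
    univ.filter (fun z => ∃ h : z ∈ (Sᶜ : Set V), (G.induce (Sᶜ : Set V)).Reachable x ⟨z, h⟩)
    with hA
  set B : Finset V := (Sᶜ : Set V).toFinset \ A with hB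
  have hAsub : A ⊆ (Sᶜ : Set V).toFinset := by
    intro z hz
    rw [hA, Finset.mem_filter] at hz
    rw [Set.mem_toFinset]
    exact hz.2.choose
  have hxA : (x : V) ∈ A := by
    rw [hA, Finset.mem_filter]
    exact ⟨mem_univ _, x.2, by exact SimpleGraph.Reachable.refl _⟩
  have hyB : (y : V) ∈ B := by
    rw [hB, Finset.mem_sdiff, Set.mem_toFinset]
    refine ⟨y.2, fun hy => ?_⟩
    rw [hA, Finset.mem_filter] at hy
    obtain ⟨-, hm, hre⟩ := hy
    have heq : (⟨(y : V), hm⟩ : ↥(Sᶜ : Set V)) = y := Subtype.ext rfl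
    exact hxy (heq ▸ hre)
  refine ⟨A, B, Finset.disjoint_sdiff, ⟨x, hxA⟩, ⟨y, hyB⟩, ?_, ?_⟩
  · have := Finset.card_sdiff_add_card_eq_card hAsub
    rw [← hB] at this
    have h3 : ((Sᶜ : Set V).toFinset).card = Fintype.card V - r := by
      rw [← Set.ncard_eq_toFinset_card', hcompl]
    omega
  · intro a ha b hb hadj
    rw [hA, Finset.mem_filter] at ha
    obtain ⟨-, haS, hra⟩ := ha
    rw [hB, Finset.mem_sdiff, Set.mem_toFinset] at hb
    obtain ⟨hbS, hbA⟩ := hb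
    apply hbA
    rw [hA, Finset.mem_filter]
    refine ⟨mem_univ _, hbS, hra.trans ?_⟩
    exact SimpleGraph.Adj.reachable (by exact hadj)

lemma struct_of_pairs {V : Type*} [Fintype V] [DecidableEq V] (G : SimpleGraph V)
    [DecidableRel G.Adj] (A B : Finset V) (hd : Disjoint A B) (v : V) (hA : A = {v})
    (hM : (univ ×ˢ univ).filter (fun p : V × V => p.1 ≠ p.2 ∧ ¬ G.Adj p.1 p.2)
      = A ×ˢ B ∪ B ×ˢ A) :
    KnrStruct G v (univ \ insert v B) := by
  have hvB : v ∉ B := by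
    intro h
    exact (Finset.disjoint_left.1 hd (hA ▸ Finset.mem_singleton_self v)) h
  constructor
  · simp
  · intro u w
    have key : (u ≠ w ∧ ¬ G.Adj u w) ↔ ((u = v ∧ w ∈ B) ∨ (u ∈ B ∧ w = v)) := by
      constructor
      · intro h
        have : (u, w) ∈ (univ ×ˢ univ).filter
            (fun p : V × V => p.1 ≠ p.2 ∧ ¬ G.Adj p.1 p.2) := by
          simp [h.1, h.2]
        rw [hM, hA] at this
        simp only [Finset.mem_union, Finset.mem_product, Finset.mem_singleton] at this
        exact this
      · intro h
        have : (u, w) ∈ A ×ˢ B ∪ B ×ˢ A := by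
          rw [hA]
          simp only [Finset.mem_union, Finset.mem_product, Finset.mem_singleton]
          exact h
        rw [← hM] at this
        simpa using this
    simp only [Finset.mem_sdiff, Finset.mem_univ, true_and, Finset.mem_insert, not_or]
    by_cases huw : u = w
    · simp only [huw]
      constructor
      · intro h; exact absurd rfl h.ne
      · rintro ⟨h, -⟩; exact absurd rfl h
    · have huB : u ∈ B → u ≠ v := fun h1 h2 => hvB (h2 ▸ h1)
      have hwB : w ∈ B → w ≠ v := fun h1 h2 => hvB (h2 ▸ h1)
      by_cases hadj : G.Adj u w
      · have hnot : ¬((u = v ∧ w ∈ B) ∨ (u ∈ B ∧ w = v)) := by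
          rw [← key]; tauto
        simp only [iff_true_intro hadj, true_iff]
        refine ⟨huw, ?_⟩
        by_cases hu : u = v
        · refine Or.inr (Or.inl ⟨hu, ?_, ?_⟩)
          · intro h; exact huw (hu.trans h.symm)
          · intro h; exact hnot (Or.inl ⟨hu, h⟩)
        · by_cases hw : w = v
          · refine Or.inr (Or.inr ⟨hw, hu, fun h => hnot (Or.inr ⟨h, hw⟩)⟩)
          · exact Or.inl ⟨hu, hw⟩
      · have hpat := key.1 ⟨huw, hadj⟩
        simp only [iff_false_intro hadj, false_iff]
        rintro ⟨-, ⟨h1, h2⟩ | ⟨h1, h2⟩ | ⟨h1, h2⟩⟩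
        · rcases hpat with ⟨h3, -⟩ | ⟨-, h3⟩ <;> [exact h1 h3; exact h2 h3]
        · rcases hpat with ⟨-, h3⟩ | ⟨h3, -⟩
          · exact h2.2 h3
          · exact huB h3 h1
        · rcases hpat with ⟨h3, -⟩ | ⟨h3, -⟩
          · exact h2.1 h3
          · exact h2.2 h3

lemma one_div_dist_le {V : Type*} [DecidableEq V] (G : SimpleGraph V) [DecidableRel G.Adj]
    (u w : V) :
    (1 : ℝ) / (G.dist u w) ≤ if u = w then 0 else if G.Adj u w then 1 else 1/2 := by
  by_cases huw : u = w
  · subst huw; simp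
  · rw [if_neg huw]
    by_cases hA : G.Adj u w
    · rw [if_pos hA, (SimpleGraph.dist_eq_one_iff_adj).2 hA]; norm_num
    · rw [if_neg hA]
      rcases Nat.eq_zero_or_pos (G.dist u w) with h | h
      · rw [h]; norm_num
      · have h2 : 2 ≤ G.dist u w := by
          have h1 : G.dist u w ≠ 1 := fun hc => hA ((SimpleGraph.dist_eq_one_iff_adj).1 hc)
          omega
        have : (2 : ℝ) ≤ (G.dist u w : ℝ) := by exact_mod_cast h2
        rw [div_le_div_iff₀ (by linarith) (by norm_num)]
        linarith

lemma sum_c_eq {V : Type*} [Fintype V] [DecidableEq V] (G : SimpleGraph V)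
    [DecidableRel G.Adj] :
    ∑ u : V, ∑ w : V, (if u = w then (0:ℝ) else if G.Adj u w then 1 else 1/2)
      = (Fintype.card V : ℝ) * (Fintype.card V) - (Fintype.card V)
        - (((univ ×ˢ univ).filter
            (fun p : V × V => p.1 ≠ p.2 ∧ ¬ G.Adj p.1 p.2)).card : ℝ) / 2 := by
  have hptw : ∀ u w : V, (if u = w then (0:ℝ) else if G.Adj u w then 1 else 1/2)
      = 1 - (if u = w then (1:ℝ) else 0)
        - (if u ≠ w ∧ ¬ G.Adj u w then (1:ℝ) else 0) / 2 := by
    intro u w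
    by_cases huw : u = w
    · simp [huw]
    · by_cases hA : G.Adj u w <;> simp [huw, hA] <;> norm_num
  simp only [hptw]
  simp only [Finset.sum_sub_distrib, ← Finset.sum_div]
  have T2 : ∑ u : V, ∑ w : V, (if u = w then (1:ℝ) else 0) = (Fintype.card V : ℝ) := by
    simp
  have T3 : ∑ u : V, ∑ w : V, (if u ≠ w ∧ ¬ G.Adj u w then (1:ℝ) else 0)
      = (((univ ×ˢ univ).filter
          (fun p : V × V => p.1 ≠ p.2 ∧ ¬ G.Adj p.1 p.2)).card : ℝ) := by
    rw [← Finset.sum_product', Finset.sum_boole]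
  rw [T2, T3]
  simp only [Finset.sum_const, Finset.card_univ, nsmul_eq_mul, mul_one]

lemma knrStruct_of_iso {V W : Type*} [DecidableEq V] {G : SimpleGraph V}
    {G' : SimpleGraph W} {w : W} {T : Finset W}
    (h' : KnrStruct G' w T) (φ : G ≃g G') :
    KnrStruct G (φ.symm w) (T.image φ.symm) := by
  have hmem : ∀ x : V, x ∈ T.image φ.symm ↔ φ x ∈ T := by
    intro x
    rw [Finset.mem_image]
    constructor
    · rintro ⟨y, hy, rfl⟩
      rwa [RelIso.apply_symm_apply]
    · intro hx
      exact ⟨φ x, hx, by rw [RelIso.symm_apply_apply]⟩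
  have heqv : ∀ x : V, x = φ.symm w ↔ φ x = w := by
    intro x
    constructor
    · rintro rfl; rw [RelIso.apply_symm_apply]
    · intro hx; rw [← hx, RelIso.symm_apply_apply]
  constructor
  · rw [hmem, RelIso.apply_symm_apply]
    exact h'.1
  · intro u z
    rw [← φ.map_adj_iff, h'.2 (φ u) (φ z)]
    simp only [Ne, heqv, hmem, ← φ.injective.eq_iff]

/-- A graph of order `n` with vertex connectivity `r` (`1 ≤ r ≤ n − 2`) satisfies
`H(G) ≤ ((n−1)² + r)/2`, with equality iff `G ≅ K(n−1, r)`. -/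
theorem harary_le_of_vertexConnectivity (n r : ℕ) (hr : 1 ≤ r) (hrn : r + 2 ≤ n)
    {V : Type*} [Fintype V] (G : SimpleGraph V) (hcard : Fintype.card V = n)
    (hconn : vertexConnectivity G = r) :
    hararyIndex G ≤ (((n : ℝ) - 1) ^ 2 + r) / 2 ∧
      (hararyIndex G = (((n : ℝ) - 1) ^ 2 + r) / 2 ↔ Nonempty (G ≃g Knr n r)) := by
  classical
  have hn3 : 3 ≤ n := by omega
  -- Knr structure data
  have hKnr := knrStruct_Knr n r hr hrn
  have hTcard : (univ.filter (fun i : Fin n => (i : ℕ) < r)).card = r :=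
    knr_filter_card n r (by omega)
  -- the cut
  obtain ⟨A, B, hd, hAne, hBne, hcardAB, hnadj⟩ :=
    cut_pairs G r hconn (by rw [hcard]; omega)
  set M : Finset (V × V) :=
    (univ ×ˢ univ).filter (fun p : V × V => p.1 ≠ p.2 ∧ ¬ G.Adj p.1 p.2) with hM
  have hsub : A ×ˢ B ∪ B ×ˢ A ⊆ M := by
    intro p hp
    rw [Finset.mem_union, Finset.mem_product, Finset.mem_product] at hp
    rw [hM, Finset.mem_filter]
    refine ⟨by simp, ?_⟩
    rcases hp with ⟨h1, h2⟩ | ⟨h1, h2⟩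
    · exact ⟨fun hc => (Finset.disjoint_left.1 hd h1) (hc ▸ h2), hnadj _ h1 _ h2⟩
    · exact ⟨fun hc => (Finset.disjoint_left.1 hd h2) (hc.symm ▸ h1),
        fun hadj => hnadj _ h2 _ h1 hadj.symm⟩
  have hdisjprod : Disjoint (A ×ˢ B) (B ×ˢ A) := by
    rw [Finset.disjoint_left]
    rintro p hp hp2
    rw [Finset.mem_product] at hp hp2
    exact (Finset.disjoint_left.1 hd hp.1) hp2.1
  have hunion_card : (A ×ˢ B ∪ B ×ˢ A).card = 2 * (A.card * B.card) := by
    rw [Finset.card_union_of_disjoint hdisjprod, Finset.card_product,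
      Finset.card_product]
    ring
  have hA1 : 1 ≤ A.card := Finset.card_pos.2 hAne
  have hB1 : 1 ≤ B.card := Finset.card_pos.2 hBne
  have hab : A.card + B.card - 1 ≤ A.card * B.card := by
    obtain ⟨a, ha⟩ : ∃ a, A.card = a + 1 := ⟨A.card - 1, by omega⟩
    obtain ⟨b, hb⟩ : ∃ b, B.card = b + 1 := ⟨B.card - 1, by omega⟩
    rw [ha, hb]
    have : (a + 1) * (b + 1) = a * b + a + b + 1 := by ring
    omega
  have habn : A.card + B.card = n - r := by rw [← hcard]; exact hcardAB
  have hMcard : 2 * (n - r - 1) ≤ M.card := by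
    calc 2 * (n - r - 1) ≤ 2 * (A.card * B.card) := by
            have : n - r - 1 ≤ A.card * B.card := by omega
            omega
      _ = (A ×ˢ B ∪ B ×ˢ A).card := hunion_card.symm
      _ ≤ M.card := Finset.card_le_card hsub
  -- real inequality chain
  set SD : ℝ := ∑ u : V, ∑ w : V, (1 : ℝ) / (G.dist u w) with hSD
  have hsumle : SD
      ≤ ∑ u : V, ∑ w : V, (if u = w then (0:ℝ) else if G.Adj u w then 1 else 1/2) :=
    Finset.sum_le_sum fun u _ => Finset.sum_le_sum fun w _ => one_div_dist_le G u w
  have hcval : ∑ u : V, ∑ w : V, (if u = w then (0:ℝ) else if G.Adj u w then 1 else 1/2)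
      = (n : ℝ) * n - n - (M.card : ℝ) / 2 := by
    rw [sum_c_eq G, hcard]
  have hMreal : 2 * ((n : ℝ) - r - 1) ≤ (M.card : ℝ) := by
    have h1 : ((2 * (n - r - 1) : ℕ) : ℝ) = 2 * ((n : ℝ) - r - 1) := by
      rw [Nat.sub_sub, Nat.cast_mul, Nat.cast_sub (by omega)]
      push_cast; ring
    rw [← h1]
    exact_mod_cast hMcard
  rw [hcval] at hsumle
  have hkey : SD ≤ ((n : ℝ) - 1) ^ 2 + r := by nlinarith [hsumle, hMreal]
  have hH : hararyIndex G = SD / 2 := by rw [hararyIndex, hSD]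
  have hineq : hararyIndex G ≤ (((n : ℝ) - 1) ^ 2 + r) / 2 := by
    rw [hH]; linarith
  refine ⟨hineq, ?_, ?_⟩
  · -- equality implies isomorphic
    intro heq
    rw [hH] at heq
    have hsum_eq : SD = ((n : ℝ) - 1) ^ 2 + r := by linarith
    have hMr : (M.card : ℝ) = 2 * ((n : ℝ) - r - 1) := by
      nlinarith [hsumle, hMreal, hsum_eq]
    have hMnat : M.card = 2 * (n - r - 1) := by
      have h1 : ((2 * (n - r - 1) : ℕ) : ℝ) = 2 * ((n : ℝ) - r - 1) := by
        rw [Nat.sub_sub, Nat.cast_mul, Nat.cast_sub (by omega)]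
        push_cast; ring
      exact_mod_cast hMr.trans h1.symm
    have hMeqU : A ×ˢ B ∪ B ×ˢ A = M := by
      apply Finset.eq_of_subset_of_card_le hsub
      rw [hunion_card, hMnat]
      have : n - r - 1 ≤ A.card * B.card := by omega
      omega
    have habe : A.card * B.card = A.card + B.card - 1 := by
      have h1 : 2 * (A.card * B.card) ≤ 2 * (n - r - 1) := by
        rw [← hMnat, ← hMeqU, hunion_card]
      omega
    have hone : A.card = 1 ∨ B.card = 1 := by
      obtain ⟨a, ha⟩ : ∃ a, A.card = a + 1 := ⟨A.card - 1, by omega⟩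
      obtain ⟨b, hb⟩ : ∃ b, B.card = b + 1 := ⟨B.card - 1, by omega⟩
      rw [ha, hb] at habe
      have h2 : (a + 1) * (b + 1) = a * b + a + b + 1 := by ring
      have : a * b = 0 := by omega
      rcases Nat.mul_eq_zero.1 this with h | h
      · left; omega
      · right; omega
    have main : ∀ (A' B' : Finset V), Disjoint A' B' → A'.card = 1 →
        A'.card + B'.card = n - r →
        (univ ×ˢ univ).filter (fun p : V × V => p.1 ≠ p.2 ∧ ¬ G.Adj p.1 p.2)
          = A' ×ˢ B' ∪ B' ×ˢ A' → Nonempty (G ≃g Knr n r) := by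
      intro A' B' hd' hA'1 hsum' hM'
      obtain ⟨v, hv⟩ := Finset.card_eq_one.1 hA'1
      have hstruct := struct_of_pairs G A' B' hd' v hv hM'
      have hvB : v ∉ B' := fun h =>
        (Finset.disjoint_left.1 hd' (hv ▸ Finset.mem_singleton_self v)) h
      have hScard : (univ \ insert v B').card = r := by
        rw [Finset.card_sdiff_of_subset (subset_univ _), Finset.card_insert_of_notMem hvB,
          Finset.card_univ, hcard]
        have : A'.card = 1 := hA'1
        omega
      exact knrStruct_nonempty_iso hstruct hKnr
        (by rw [hcard, Fintype.card_fin]) (by rw [hScard, hTcard])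
    rcases hone with h1 | h1
    · exact main A B hd h1 habn (by rw [← hM, hMeqU.symm])
    · refine main B A hd.symm h1 (by omega) ?_
      rw [← hM, hMeqU.symm, Finset.union_comm]
  · -- isomorphic implies equality
    rintro ⟨φ⟩
    have hstruct := knrStruct_of_iso hKnr φ
    have hScard : ((univ.filter (fun i : Fin n => (i : ℕ) < r)).image φ.symm).card = r := by
      rw [Finset.card_image_of_injective _ φ.symm.injective, hTcard]
    rw [hararyIndex, knrStruct_sum G _ _ hstruct
      (by rw [← Finset.card_pos, hScard]; omega) (by rw [hScard, hcard]; omega)]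
    rw [hcard, hScard]
    ring
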